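/- Let k, ℓ ∈ ℕ. For every subset A ⊆ ℤ^ℓ there exist a probability space (X, 𝒳, μ), commuting invertible measure-preserving transformations T₁, …, T_ℓ of X, and a measurable set E ∈ 𝒳 such that: (1) d̄(A) = μ(E); and (2) for all vectors n₁, …, n_k ∈ ℤ^ℓ, writing n_i = (n_{i1}, …, n_{iℓ}), one has d̄(A ∩ (A − n₁) ∩ ⋯ ∩ (A − n_k)) ≥ μ(E ∩ (T₁^{n_{11}}⋯T_ℓ^{n_{1ℓ}})^{-1}E ∩ ⋯ ∩ (T₁^{n_{k1}}⋯T_ℓ^{n_{kℓ}})^{-1}E). -/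

import Mathlib

open MeasureTheory Filter ENNReal Topology

/-- The group of measurable self-equivalences of `X`, with multiplication given by
composition of maps: `⇑(g * h) = ⇑g ∘ ⇑h`. -/
instance measurableEquivGroup {X : Type*} [MeasurableSpace X] : Group (X ≃ᵐ X) where
  mul g h := h.trans g
  one := MeasurableEquiv.refl X
  inv := MeasurableEquiv.symm
  mul_assoc _ _ _ := MeasurableEquiv.ext rfl
  one_mul _ := MeasurableEquiv.ext rfl
  mul_one _ := MeasurableEquiv.ext rfl
  inv_mul_cancel g := MeasurableEquiv.ext (funext fun x => g.symm_apply_apply x)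

/-- Upper density of a subset of `ℤ^l`. -/
noncomputable def upperDensityZ (l : ℕ) (A : Set (Fin l → ℤ)) : ℝ :=
  Filter.limsup (fun N : ℕ =>
    (Nat.card {m : Fin l → ℤ // m ∈ A ∧ ∀ i, |m i| ≤ (N : ℤ)} : ℝ) / (2 * (N : ℝ) + 1) ^ l)
    Filter.atTop

noncomputable section FCP

namespace FCP

open Set TopologicalSpace Finset
open scoped NNReal ENNReal

variable {l : ℕ}

abbrev XX (l : ℕ) : Type := (Fin l → ℤ) → Bool

/-- The box of radius `r` in `ℤ^l`. -/
def Box (l : ℕ) (r : ℤ) : Set (Fin l → ℤ) := {m | ∀ i, |m i| ≤ r}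

lemma mem_Box {r : ℤ} {m : Fin l → ℤ} : m ∈ Box l r ↔ ∀ i, |m i| ≤ r := Iff.rfl

lemma Box_eq_coe (r : ℤ) :
    Box l r = ↑(Fintype.piFinset fun _ : Fin l => Finset.Icc (-r) r) := by
  ext m
  simp only [Box, Set.mem_setOf_eq, Finset.mem_coe, Fintype.mem_piFinset, Finset.mem_Icc, abs_le]

lemma Box_finite (r : ℤ) : (Box l r).Finite := by
  rw [Box_eq_coe]; exact (Fintype.piFinset _).finite_toSet

lemma ncard_Box (r : ℤ) (hr : 0 ≤ r) : ((Box l r).ncard : ℝ) = (2 * (r : ℝ) + 1) ^ l := by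
  rw [Box_eq_coe, Set.ncard_coe_finset]
  have h1 : (Fintype.piFinset fun _ : Fin l => Finset.Icc (-r) r).card
      = ((2 * r + 1).toNat) ^ l := by
    simp only [Fintype.card_piFinset, Int.card_Icc, Finset.prod_const, Finset.card_univ,
      Fintype.card_fin]
    congr 2
    omega
  rw [h1]
  have h2 : (((2 * r + 1).toNat : ℤ) : ℝ) = 2 * (r:ℝ) + 1 := by
    rw [Int.toNat_of_nonneg (by omega)]; push_cast; ring
  push_cast at h2 ⊢
  rw [h2]

/-- number of points of `P` in the box of radius `N`. -/
def cnt (P : Set (Fin l → ℤ)) (N : ℕ) : ℕ := (Box l N ∩ P).ncard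

def den (l N : ℕ) : ℝ := (2 * (N : ℝ) + 1) ^ l

lemma den_pos (l N : ℕ) : 0 < den l N := by
  have h : (0:ℝ) < 2 * (N:ℝ) + 1 := by positivity
  exact pow_pos h l

lemma ncard_BoxN (N : ℕ) : ((Box l N).ncard : ℝ) = den l N := ncard_Box _ (by positivity)

lemma cnt_finite (P : Set (Fin l → ℤ)) (N : ℕ) : (Box l (N:ℤ) ∩ P).Finite :=
  (Box_finite _).inter_of_left _

/-- density fraction sequence. -/
def frac (P : Set (Fin l → ℤ)) (N : ℕ) : ℝ := (cnt P N : ℝ) / den l N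

lemma cnt_mono {P Q : Set (Fin l → ℤ)} (h : P ⊆ Q) (N : ℕ) : cnt P N ≤ cnt Q N :=
  Set.ncard_le_ncard (Set.inter_subset_inter_right _ h) (cnt_finite Q N)

lemma cnt_le_card (P : Set (Fin l → ℤ)) (N : ℕ) : cnt P N ≤ (Box l N).ncard :=
  Set.ncard_le_ncard Set.inter_subset_left (Box_finite _)

lemma cnt_univ (N : ℕ) : cnt (Set.univ : Set (Fin l → ℤ)) N = (Box l N).ncard := by
  simp [cnt]

lemma cnt_inter_add_diff (P Q : Set (Fin l → ℤ)) (N : ℕ) :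
    cnt (P ∩ Q) N + cnt (P \ Q) N = cnt P N := by
  unfold cnt
  rw [← Set.inter_assoc]
  have : Box l N ∩ (P \ Q) = (Box l N ∩ P) \ Q := by
    ext x; simp [Set.mem_diff, Set.mem_inter_iff]; tauto
  rw [this]
  exact Set.ncard_inter_add_ncard_diff_eq_ncard _ _ (cnt_finite P N)

lemma cnt_union_le (P Q : Set (Fin l → ℤ)) (N : ℕ) :
    cnt (P ∪ Q) N ≤ cnt P N + cnt Q N := by
  unfold cnt
  rw [Set.inter_union_distrib_left]
  exact Set.ncard_union_le _ _

lemma frac_nonneg (P : Set (Fin l → ℤ)) (N : ℕ) : 0 ≤ frac P N :=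
  div_nonneg (by positivity) (den_pos l N).le

lemma frac_le_one (P : Set (Fin l → ℤ)) (N : ℕ) : frac P N ≤ 1 := by
  rw [frac, div_le_one (den_pos l N)]
  calc ((cnt P N : ℝ)) ≤ ((Box l (N:ℤ)).ncard : ℝ) := by exact_mod_cast cnt_le_card P N
    _ = den l N := ncard_BoxN N

lemma frac_mem_Icc (P : Set (Fin l → ℤ)) (N : ℕ) : frac P N ∈ Set.Icc (0:ℝ) 1 :=
  ⟨frac_nonneg P N, frac_le_one P N⟩

lemma frac_univ (N : ℕ) : frac (Set.univ : Set (Fin l → ℤ)) N = 1 := by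
  rw [frac, cnt_univ]
  rw [ncard_BoxN, div_self (den_pos l N).ne']

lemma frac_mono {P Q : Set (Fin l → ℤ)} (h : P ⊆ Q) (N : ℕ) : frac P N ≤ frac Q N :=
  div_le_div_of_nonneg_right (by exact_mod_cast cnt_mono h N) (den_pos l N).le

lemma frac_inter_add_diff (P Q : Set (Fin l → ℤ)) (N : ℕ) :
    frac (P ∩ Q) N + frac (P \ Q) N = frac P N := by
  rw [frac, frac, frac, ← add_div]
  congr 1
  exact_mod_cast congrArg (Nat.cast : ℕ → ℝ) (cnt_inter_add_diff P Q N)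

lemma frac_union_le (P Q : Set (Fin l → ℤ)) (N : ℕ) :
    frac (P ∪ Q) N ≤ frac P N + frac Q N := by
  rw [frac, frac, frac, ← add_div]
  apply div_le_div_of_nonneg_right _ (den_pos l N).le
  exact_mod_cast cnt_union_le P Q N

/-! ### Translation estimates -/

/-- translation map on `ℤ^l`. -/
def tau (g : Fin l → ℤ) : (Fin l → ℤ) → (Fin l → ℤ) := fun m => m + g

lemma cnt_translate_le (P : Set (Fin l → ℤ)) (g : Fin l → ℤ) (M N : ℕ)
    (hM : ∀ i, |g i| ≤ (M:ℤ)) :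
    cnt (tau g ⁻¹' P) N ≤ cnt P N + ((Box l N).ncard - (Box l ((N:ℤ) - M)).ncard) := by
  set B := Box l (N:ℤ) with hB
  set I := Box l ((N:ℤ) - M) with hI
  have hIB : I ⊆ B := fun m hm i => le_trans (hm i) (by omega)
  have hsub : B ∩ tau g ⁻¹' P ⊆ (I ∩ tau g ⁻¹' P) ∪ (B \ I) := by
    intro m hm
    by_cases h : m ∈ I
    · exact Or.inl ⟨h, hm.2⟩
    · exact Or.inr ⟨hm.1, h⟩
  have h1 : (I ∩ tau g ⁻¹' P).ncard ≤ cnt P N := by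
    have himg : tau g '' (I ∩ tau g ⁻¹' P) ⊆ B ∩ P := by
      rintro _ ⟨m, ⟨hmI, hmP⟩, rfl⟩
      refine ⟨fun i => ?_, hmP⟩
      calc |(tau g m) i| = |m i + g i| := rfl
        _ ≤ |m i| + |g i| := abs_add_le _ _
        _ ≤ ((N:ℤ) - M) + M := add_le_add (hmI i) (hM i)
        _ = N := by ring
    calc (I ∩ tau g ⁻¹' P).ncard = (tau g '' (I ∩ tau g ⁻¹' P)).ncard :=
          (Set.ncard_image_of_injective _ (add_left_injective g)).symm
      _ ≤ (B ∩ P).ncard := Set.ncard_le_ncard himg (cnt_finite P N)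
  calc cnt (tau g ⁻¹' P) N = (B ∩ tau g ⁻¹' P).ncard := rfl
    _ ≤ ((I ∩ tau g ⁻¹' P) ∪ (B \ I)).ncard :=
        Set.ncard_le_ncard hsub (((Box_finite _).inter_of_left _).union ((Box_finite _).diff))
    _ ≤ (I ∩ tau g ⁻¹' P).ncard + (B \ I).ncard := Set.ncard_union_le _ _
    _ ≤ cnt P N + (B \ I).ncard := by gcongr
    _ = cnt P N + (B.ncard - I.ncard) := by rw [Set.ncard_diff hIB (Box_finite _)]

lemma cnt_translate_ge (P : Set (Fin l → ℤ)) (g : Fin l → ℤ) (M N : ℕ)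
    (hM : ∀ i, |g i| ≤ (M:ℤ)) :
    cnt P N ≤ cnt (tau g ⁻¹' P) N + ((Box l N).ncard - (Box l ((N:ℤ) - M)).ncard) := by
  set B := Box l (N:ℤ) with hB
  set I := Box l ((N:ℤ) - M) with hI
  have hIB : I ⊆ B := fun m hm i => le_trans (hm i) (by omega)
  have hsub : B ∩ P ⊆ (I ∩ P) ∪ (B \ I) := by
    intro m hm
    by_cases h : m ∈ I
    · exact Or.inl ⟨h, hm.2⟩
    · exact Or.inr ⟨hm.1, h⟩
  have h1 : (I ∩ P).ncard ≤ cnt (tau g ⁻¹' P) N := by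
    have himg : (fun m => m - g) '' (I ∩ P) ⊆ B ∩ tau g ⁻¹' P := by
      rintro _ ⟨m, ⟨hmI, hmP⟩, rfl⟩
      constructor
      · intro i
        calc |(m - g) i| = |m i - g i| := rfl
          _ ≤ |m i| + |g i| := abs_sub _ _
          _ ≤ ((N:ℤ) - M) + M := add_le_add (hmI i) (hM i)
          _ = N := by ring
      · show tau g (m - g) ∈ P
        have : tau g (m - g) = m := by
          funext i; simp [tau]
        rwa [this]
    calc (I ∩ P).ncard = ((fun m => m - g) '' (I ∩ P)).ncard :=
          (Set.ncard_image_of_injective _ (sub_left_injective)).symm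
      _ ≤ (B ∩ tau g ⁻¹' P).ncard := Set.ncard_le_ncard himg (cnt_finite _ N)
  calc cnt P N = (B ∩ P).ncard := rfl
    _ ≤ ((I ∩ P) ∪ (B \ I)).ncard :=
        Set.ncard_le_ncard hsub (((Box_finite _).inter_of_left _).union ((Box_finite _).diff))
    _ ≤ (I ∩ P).ncard + (B \ I).ncard := Set.ncard_union_le _ _
    _ ≤ cnt (tau g ⁻¹' P) N + (B \ I).ncard := by gcongr
    _ = cnt (tau g ⁻¹' P) N + (B.ncard - I.ncard) := by rw [Set.ncard_diff hIB (Box_finite _)]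

/-- the error sequence -/
def err (l M : ℕ) (N : ℕ) : ℝ := 1 - (2 * ((N:ℝ) - M) + 1) ^ l / den l N

lemma frac_translate_bound (P : Set (Fin l → ℤ)) (g : Fin l → ℤ) (M N : ℕ)
    (hM : ∀ i, |g i| ≤ (M:ℤ)) (hNM : M ≤ N) :
    |frac (tau g ⁻¹' P) N - frac P N| ≤ err l M N := by
  have hIB : Box l ((N:ℤ) - M) ⊆ Box l (N:ℤ) := fun m hm i => le_trans (hm i) (by omega)
  have hcards : (Box l ((N:ℤ) - M)).ncard ≤ (Box l (N:ℤ)).ncard :=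
    Set.ncard_le_ncard hIB (Box_finite _)
  have hIcard : (((Box l ((N:ℤ) - M)).ncard : ℝ)) = (2 * ((N:ℝ) - M) + 1) ^ l := by
    have := ncard_Box (l := l) ((N:ℤ) - M) (by omega)
    rw [this]; push_cast; ring_nf
  have hdiffcard : ((((Box l (N:ℤ)).ncard - (Box l ((N:ℤ) - M)).ncard : ℕ)) : ℝ)
      = den l N - (2 * ((N:ℝ) - M) + 1) ^ l := by
    rw [Nat.cast_sub hcards, ncard_BoxN, hIcard]
  have h1 := cnt_translate_le P g M N hM
  have h2 := cnt_translate_ge P g M N hM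
  have h1' : (cnt (tau g ⁻¹' P) N : ℝ) ≤ cnt P N + (den l N - (2 * ((N:ℝ) - M) + 1) ^ l) := by
    rw [← hdiffcard]; exact_mod_cast h1
  have h2' : (cnt P N : ℝ) ≤ cnt (tau g ⁻¹' P) N + (den l N - (2 * ((N:ℝ) - M) + 1) ^ l) := by
    rw [← hdiffcard]; exact_mod_cast h2
  have hden := den_pos l N
  have key : |(cnt (tau g ⁻¹' P) N : ℝ) - cnt P N| ≤ den l N - (2 * ((N:ℝ) - M) + 1) ^ l :=
    abs_le.mpr ⟨by linarith, by linarith⟩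
  have e1 : frac (tau g ⁻¹' P) N - frac P N
      = ((cnt (tau g ⁻¹' P) N : ℝ) - cnt P N) / den l N := by
    rw [frac, frac, div_sub_div_same]
  rw [e1, abs_div, abs_of_pos hden, div_le_iff₀ hden]
  unfold err
  have hId : (2 * ((N:ℝ) - M) + 1) ^ l / den l N * den l N = (2 * ((N:ℝ) - M) + 1) ^ l :=
    div_mul_cancel₀ _ hden.ne'
  nlinarith [key]

lemma tendsto_den_atTop : Tendsto (fun N : ℕ => 2 * (N:ℝ) + 1) atTop atTop := by
  apply Filter.tendsto_atTop_add_const_right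
  exact (tendsto_natCast_atTop_atTop (R := ℝ)).const_mul_atTop (by norm_num)

lemma tendsto_err (l M : ℕ) : Tendsto (err l M) atTop (𝓝 0) := by
  have h0 : Tendsto (fun N : ℕ => (2 * (M:ℝ)) / (2 * (N:ℝ) + 1)) atTop (𝓝 0) :=
    tendsto_const_nhds.div_atTop tendsto_den_atTop
  have h1 : Tendsto (fun N : ℕ => (1 - (2 * (M:ℝ)) / (2 * (N:ℝ) + 1)) ^ l) atTop (𝓝 1) := by
    have := (tendsto_const_nhds (x := (1:ℝ)) (f := atTop (α := ℕ))).sub h0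
    rw [sub_zero] at this
    simpa using this.pow l
  have h2 : Tendsto (fun N : ℕ => 1 - (1 - (2 * (M:ℝ)) / (2 * (N:ℝ) + 1)) ^ l) atTop (𝓝 0) := by
    have := (tendsto_const_nhds (x := (1:ℝ)) (f := atTop (α := ℕ))).sub h1
    simpa using this
  apply h2.congr
  intro N
  have hpos : (0:ℝ) < 2 * (N:ℝ) + 1 := by positivity
  unfold err den
  rw [← div_pow]
  congr 2
  field_simp
  ring

/-! ### Ultrafilter limits -/

lemma tendsto_ultralim (U : Ultrafilter ℕ) {f : ℕ → ℝ} (h : ∀ n, f n ∈ Set.Icc (0:ℝ) 1) :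
    Tendsto f U (𝓝 (limUnder U f)) := by
  apply tendsto_nhds_limUnder
  have hle : (U.map f : Filter ℝ) ≤ Filter.principal (Set.Icc 0 1) := by
    rw [le_principal_iff]
    exact Filter.mem_map.mpr (Filter.univ_mem' h)
  obtain ⟨a, -, ha⟩ := isCompact_Icc.ultrafilter_le_nhds (U.map f) hle
  exact ⟨a, ha⟩

variable (U : Ultrafilter ℕ)

/-- the limiting density along the ultrafilter -/
def LD (P : Set (Fin l → ℤ)) : ℝ := limUnder (U : Filter ℕ) (frac P)

lemma LD_tendsto (P : Set (Fin l → ℤ)) : Tendsto (frac P) U (𝓝 (LD U P)) :=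
  tendsto_ultralim U (frac_mem_Icc P)

lemma LD_nonneg (P : Set (Fin l → ℤ)) : 0 ≤ LD U P :=
  ge_of_tendsto' (LD_tendsto U P) (fun N => frac_nonneg P N) |>.trans_eq rfl

lemma LD_le_one (P : Set (Fin l → ℤ)) : LD U P ≤ 1 :=
  le_of_tendsto' (LD_tendsto U P) (fun N => frac_le_one P N)

lemma LD_mono {P Q : Set (Fin l → ℤ)} (h : P ⊆ Q) : LD U P ≤ LD U Q :=
  le_of_tendsto_of_tendsto' (LD_tendsto U P) (LD_tendsto U Q) (fun N => frac_mono h N)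

lemma LD_inter_add_diff (P Q : Set (Fin l → ℤ)) :
    LD U (P ∩ Q) + LD U (P \ Q) = LD U P :=
  tendsto_nhds_unique (((LD_tendsto U (P ∩ Q)).add (LD_tendsto U (P \ Q))).congr
    (fun N => frac_inter_add_diff P Q N)) (LD_tendsto U P)

lemma LD_union_le (P Q : Set (Fin l → ℤ)) : LD U (P ∪ Q) ≤ LD U P + LD U Q :=
  le_of_tendsto_of_tendsto' (LD_tendsto U (P ∪ Q))
    ((LD_tendsto U P).add (LD_tendsto U Q)) (fun N => frac_union_le P Q N)

lemma LD_univ : LD U (Set.univ : Set (Fin l → ℤ)) = 1 :=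
  tendsto_nhds_unique (LD_tendsto U Set.univ)
    (tendsto_const_nhds.congr (fun N => (frac_univ N).symm))

lemma LD_translate (hU : (U : Filter ℕ) ≤ atTop) (P : Set (Fin l → ℤ)) (g : Fin l → ℤ) :
    LD U (tau g ⁻¹' P) = LD U P := by
  set M : ℕ := Finset.univ.sum fun i => (g i).natAbs with hMdef
  have hM : ∀ i, |g i| ≤ (M:ℤ) := by
    intro i
    rw [Int.abs_eq_natAbs]
    exact_mod_cast Finset.single_le_sum (f := fun i => (g i).natAbs)
      (fun _ _ => Nat.zero_le _) (Finset.mem_univ i)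
  have hb : ∀ᶠ N in atTop, |frac (tau g ⁻¹' P) N - frac P N| ≤ err l M N :=
    Filter.eventually_atTop.mpr ⟨M, fun N hN => frac_translate_bound P g M N hM hN⟩
  have hdiff : Tendsto (fun N => |frac (tau g ⁻¹' P) N - frac P N|) U
      (𝓝 |LD U (tau g ⁻¹' P) - LD U P|) :=
    ((LD_tendsto U (tau g ⁻¹' P)).sub (LD_tendsto U P)).abs
  have hle : |LD U (tau g ⁻¹' P) - LD U P| ≤ 0 :=
    le_of_tendsto_of_tendsto hdiff ((tendsto_err l M).mono_left hU) (hb.filter_mono hU)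
  exact sub_eq_zero.mp (abs_eq_zero.mp (le_antisymm hle (abs_nonneg _)))

/-! ### The Cantor cube, shifts, and the embedding -/

/-- The basic set `E`. -/
def EE (l : ℕ) : Set (XX l) := {x | x 0 = true}

lemma isClopen_EE : IsClopen (EE l) := by
  have : EE l = (fun x : XX l => x 0) ⁻¹' {true} := by
    ext x; simp [EE]
  rw [this]
  exact (isClopen_discrete _).preimage (continuous_apply _)

/-- The shift function. -/
def shiftF (g : Fin l → ℤ) : XX l → XX l := fun x p => x (p + g)

lemma shiftF_comp (g h : Fin l → ℤ) (x : XX l) : shiftF g (shiftF h x) = shiftF (g + h) x := by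
  funext p
  simp [shiftF, add_assoc]

lemma shiftF_zero (x : XX l) : shiftF 0 x = x := by
  funext p; simp [shiftF]

lemma continuous_shiftF (g : Fin l → ℤ) : Continuous (shiftF (l := l) g) :=
  continuous_pi fun p => continuous_apply _

lemma measurable_shiftF (g : Fin l → ℤ) : Measurable (shiftF (l := l) g) :=
  (continuous_shiftF g).measurable

/-- The shift as a measurable equivalence. -/
def shiftE (g : Fin l → ℤ) : XX l ≃ᵐ XX l where
  toFun := shiftF g
  invFun := shiftF (-g)
  left_inv := fun x => by rw [shiftF_comp, neg_add_cancel, shiftF_zero]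
  right_inv := fun x => by rw [shiftF_comp, add_neg_cancel, shiftF_zero]
  measurable_toFun := measurable_shiftF g
  measurable_invFun := measurable_shiftF (-g)

lemma shiftE_coe (g : Fin l → ℤ) : ⇑(shiftE (l := l) g) = shiftF g := rfl

/-- The shift homomorphism. -/
def Shom (l : ℕ) : Multiplicative (Fin l → ℤ) →* (XX l ≃ᵐ XX l) where
  toFun g := shiftE (Multiplicative.toAdd g)
  map_one' := MeasurableEquiv.ext (funext fun x => shiftF_zero x)
  map_mul' g h := MeasurableEquiv.ext (funext fun x => (shiftF_comp _ _ x).symm)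

lemma Shom_coe (g : Fin l → ℤ) : ⇑(Shom l (Multiplicative.ofAdd g)) = shiftF g := rfl

/-- The embedding of `ℤ^l` into the cube recording `A`. -/
def iota (A : Set (Fin l → ℤ)) : (Fin l → ℤ) → XX l :=
  fun a p => @decide ((p + a) ∈ A) (Classical.propDecidable _)

lemma iota_mem_EE {A : Set (Fin l → ℤ)} {a : Fin l → ℤ} : iota A a ∈ EE l ↔ a ∈ A := by
  simp [iota, EE, zero_add]

lemma shiftF_iota (A : Set (Fin l → ℤ)) (a g : Fin l → ℤ) :
    shiftF g (iota A a) = iota A (a + g) := by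
  funext p
  show iota A a (p + g) = iota A (a + g) p
  unfold iota
  rw [show (p + g) + a = p + (a + g) from by abel]

/-! ### The limit functional on the cube and the content -/

variable (U : Ultrafilter ℕ) (A : Set (Fin l → ℤ))

/-- limiting measure of subsets of the cube. -/
def LX (C : Set (XX l)) : ℝ := LD U (iota A ⁻¹' C)

lemma LX_nonneg (C : Set (XX l)) : 0 ≤ LX U A C := LD_nonneg U _

lemma LX_le_one (C : Set (XX l)) : LX U A C ≤ 1 := LD_le_one U _

lemma LX_mono {C D : Set (XX l)} (h : C ⊆ D) : LX U A C ≤ LX U A D :=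
  LD_mono U (Set.preimage_mono h)

lemma LX_inter_add_diff (C D : Set (XX l)) :
    LX U A (C ∩ D) + LX U A (C \ D) = LX U A C := by
  unfold LX
  rw [Set.preimage_inter, Set.preimage_diff]
  exact LD_inter_add_diff U _ _

lemma LX_union_le (C D : Set (XX l)) : LX U A (C ∪ D) ≤ LX U A C + LX U A D := by
  unfold LX
  rw [Set.preimage_union]
  exact LD_union_le U _ _

lemma LX_univ : LX U A (Set.univ : Set (XX l)) = 1 := by
  unfold LX
  rw [Set.preimage_univ]
  exact LD_univ U

lemma LX_shift (hU : (U : Filter ℕ) ≤ atTop) (g : Fin l → ℤ) (C : Set (XX l)) :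
    LX U A (shiftF g ⁻¹' C) = LX U A C := by
  unfold LX
  have : iota A ⁻¹' (shiftF g ⁻¹' C) = tau g ⁻¹' (iota A ⁻¹' C) := by
    ext a
    simp only [Set.mem_preimage, shiftF_iota, tau]
  rw [this]
  exact LD_translate U hU _ g

/-- content value on compacts: infimum over clopen covers. -/
def lam (K : Set (XX l)) : ℝ := sInf (LX U A '' {C | IsClopen C ∧ K ⊆ C})

lemma lam_nonempty (K : Set (XX l)) : (LX U A '' {C | IsClopen C ∧ K ⊆ C}).Nonempty :=
  ⟨LX U A Set.univ, Set.mem_image_of_mem _ ⟨isClopen_univ, Set.subset_univ _⟩⟩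

lemma lam_bddBelow (K : Set (XX l)) : BddBelow (LX U A '' {C | IsClopen C ∧ K ⊆ C}) := by
  refine ⟨0, ?_⟩
  rintro x ⟨C, -, rfl⟩
  exact LX_nonneg U A C

lemma lam_le {K C : Set (XX l)} (hC : IsClopen C) (hKC : K ⊆ C) : lam U A K ≤ LX U A C :=
  csInf_le (lam_bddBelow U A K) (Set.mem_image_of_mem _ ⟨hC, hKC⟩)

lemma le_lam {K : Set (XX l)} {x : ℝ} (h : ∀ C, IsClopen C → K ⊆ C → x ≤ LX U A C) :
    x ≤ lam U A K :=
  le_csInf (lam_nonempty U A K) (by rintro y ⟨C, ⟨hC, hKC⟩, rfl⟩; exact h C hC hKC)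

lemma lam_nonneg (K : Set (XX l)) : 0 ≤ lam U A K :=
  le_lam U A (fun C _ _ => LX_nonneg U A C)

lemma lam_mono {K K' : Set (XX l)} (h : K ⊆ K') : lam U A K ≤ lam U A K' :=
  le_lam U A (fun C hC hK'C => lam_le U A hC (h.trans hK'C))

lemma lam_clopen {C : Set (XX l)} (hC : IsClopen C) : lam U A C = LX U A C :=
  le_antisymm (lam_le U A hC subset_rfl)
    (le_lam U A fun D hD hCD => LX_mono U A hCD)

lemma lam_sup_le (K1 K2 : Set (XX l)) : lam U A (K1 ∪ K2) ≤ lam U A K1 + lam U A K2 := by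
  have key : ∀ a ∈ LX U A '' {C | IsClopen C ∧ K1 ⊆ C},
      ∀ b ∈ LX U A '' {C | IsClopen C ∧ K2 ⊆ C}, lam U A (K1 ∪ K2) ≤ a + b := by
    rintro a ⟨C1, ⟨hC1, hK1⟩, rfl⟩ b ⟨C2, ⟨hC2, hK2⟩, rfl⟩
    calc lam U A (K1 ∪ K2) ≤ LX U A (C1 ∪ C2) :=
          lam_le U A (hC1.union hC2) (Set.union_subset_union hK1 hK2)
      _ ≤ LX U A C1 + LX U A C2 := LX_union_le U A C1 C2
  have h2 : ∀ a ∈ LX U A '' {C | IsClopen C ∧ K1 ⊆ C},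
      lam U A (K1 ∪ K2) - a ≤ lam U A K2 := by
    intro a ha
    apply le_csInf (lam_nonempty U A K2)
    intro b hb
    linarith [key a ha b hb]
  have h3 : lam U A (K1 ∪ K2) - lam U A K2 ≤ lam U A K1 := by
    apply le_csInf (lam_nonempty U A K1)
    intro a ha
    linarith [h2 a ha]
  linarith

/-- Separation of disjoint compact sets by a clopen set. -/
lemma exists_clopen_separating {K1 K2 : Set (XX l)} (h1 : IsCompact K1) (h2 : IsCompact K2)
    (hd : Disjoint K1 K2) : ∃ D : Set (XX l), IsClopen D ∧ K1 ⊆ D ∧ Disjoint D K2 := by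
  have h2c : IsClosed K2 := h2.isClosed
  have hVx : ∀ x (hx : x ∈ K1), ∃ V : Set (XX l), IsClopen V ∧ x ∈ V ∧ V ⊆ K2ᶜ := by
    intro x hx
    exact compact_exists_isClopen_in_isOpen h2c.isOpen_compl
      (Set.disjoint_left.mp hd hx)
  choose V hV hxV hVsub using hVx
  obtain ⟨t, ht⟩ := h1.elim_nhds_subcover' (fun x hx => V x hx)
    (fun x hx => (hV x hx).isOpen.mem_nhds (hxV x hx))
  refine ⟨⋃ x ∈ t, V x x.2, isClopen_biUnion_finset (fun x _ => hV x x.2), ht, ?_⟩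
  rw [Set.disjoint_left]
  intro a ha
  rw [Set.mem_iUnion₂] at ha
  obtain ⟨x, hx, hax⟩ := ha
  exact fun haK2 => (hVsub x x.2 hax) haK2

lemma lam_sup_disjoint (K1 K2 : Set (XX l)) (hK1 : IsCompact K1) (hK2 : IsCompact K2)
    (hd : Disjoint K1 K2) : lam U A (K1 ∪ K2) = lam U A K1 + lam U A K2 := by
  refine le_antisymm (lam_sup_le U A K1 K2) ?_
  obtain ⟨D, hD, hK1D, hDK2⟩ := exists_clopen_separating hK1 hK2 hd
  apply le_lam
  intro C hC hKC
  have h1 : lam U A K1 ≤ LX U A (C ∩ D) :=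
    lam_le U A (hC.inter hD) (Set.subset_inter ((Set.subset_union_left).trans hKC) hK1D)
  have h2 : lam U A K2 ≤ LX U A (C \ D) := by
    apply lam_le U A (hC.diff hD)
    intro x hx
    exact ⟨hKC (Set.subset_union_right hx), fun hxD => Set.disjoint_left.mp hDK2 hxD hx⟩
  have := LX_inter_add_diff U A C D
  linarith

/-- The content on the cube associated to `A` and `U`. -/
def cont : Content (XX l) where
  toFun K := Real.toNNReal (lam U A K)
  mono' K1 K2 h := Real.toNNReal_mono (lam_mono U A h)
  sup_disjoint' K1 K2 hd _ _ := by
    show Real.toNNReal (lam U A (↑K1 ∪ ↑K2)) = _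
    rw [lam_sup_disjoint U A K1 K2 K1.2 K2.2 hd,
      Real.toNNReal_add (lam_nonneg U A _) (lam_nonneg U A _)]
  sup_le' K1 K2 := by
    show Real.toNNReal (lam U A (↑K1 ∪ ↑K2)) ≤ _
    calc Real.toNNReal (lam U A (↑K1 ∪ ↑K2))
        ≤ Real.toNNReal (lam U A K1 + lam U A K2) :=
          Real.toNNReal_mono (lam_sup_le U A K1 K2)
      _ = _ := Real.toNNReal_add (lam_nonneg U A _) (lam_nonneg U A _)

/-- The measure on the cube. -/
def XMeasure : Measure (XX l) := (cont U A).measure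

lemma XMeasure_clopen {C : Set (XX l)} (hC : IsClopen C) :
    XMeasure U A C = ENNReal.ofReal (LX U A C) := by
  rw [XMeasure, Content.measure_apply _ hC.isOpen.measurableSet,
    (cont U A).outerMeasure_of_isOpen C hC.isOpen]
  apply le_antisymm
  · rw [Content.innerContent]
    apply iSup_le
    intro K
    apply iSup_le
    intro hKC
    show ((Real.toNNReal (lam U A K) : ℝ≥0) : ℝ≥0∞) ≤ _
    rw [ENNReal.ofReal]
    exact ENNReal.coe_le_coe.mpr (Real.toNNReal_mono (lam_le U A hC hKC))
  · refine le_trans ?_ ((cont U A).le_innerContent ⟨C, hC.isClosed.isCompact⟩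
      ⟨C, hC.isOpen⟩ subset_rfl)
    show ENNReal.ofReal (LX U A C) ≤ ((Real.toNNReal (lam U A C) : ℝ≥0) : ℝ≥0∞)
    rw [ENNReal.ofReal, lam_clopen U A hC]

instance XMeasure_prob : IsProbabilityMeasure (XMeasure U A) := by
  constructor
  rw [XMeasure_clopen U A isClopen_univ, LX_univ U A, ENNReal.ofReal_one]

lemma borel_eq_clopens :
    (inferInstance : MeasurableSpace (XX l)) =
      MeasurableSpace.generateFrom {C : Set (XX l) | IsClopen C} := by
  rw [BorelSpace.measurable_eq (α := XX l)]
  exact isTopologicalBasis_isClopen.borel_eq_generateFrom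

lemma XMeasure_shift_preserving (hU : (U : Filter ℕ) ≤ atTop) (g : Fin l → ℤ) :
    MeasurePreserving (shiftF g) (XMeasure U A) (XMeasure U A) := by
  refine ⟨measurable_shiftF g, ?_⟩
  have : IsProbabilityMeasure ((XMeasure U A).map (shiftF g)) :=
    Measure.isProbabilityMeasure_map (measurable_shiftF g).aemeasurable
  apply MeasureTheory.ext_of_generate_finite {C : Set (XX l) | IsClopen C}
    (borel_eq_clopens (l := l))
    (fun C hC D hD _ => hC.inter hD)
  · intro C hC
    rw [Measure.map_apply (measurable_shiftF g) hC.isOpen.measurableSet,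
      XMeasure_clopen U A (hC.preimage (continuous_shiftF g)), XMeasure_clopen U A hC,
      LX_shift U A hU g C]
  · rw [measure_univ, measure_univ]

/-! ### Limsup lemmas -/

lemma exists_subseq_tendsto_limsup {f : ℕ → ℝ} (h : ∀ n, f n ∈ Set.Icc (0:ℝ) 1) :
    ∃ φ : ℕ → ℕ, StrictMono φ ∧ Tendsto (f ∘ φ) atTop (𝓝 (limsup f atTop)) := by
  set d := limsup f atTop with hd
  have hbd : IsBoundedUnder (· ≤ ·) atTop f := isBoundedUnder_of ⟨1, fun n => (h n).2⟩
  have hbd' : IsBoundedUnder (· ≥ ·) atTop f := isBoundedUnder_of ⟨0, fun n => (h n).1⟩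
  have hfreq : ∀ n : ℕ, ∃ᶠ k in atTop, |f k - d| < 1/(n+1) := by
    intro n
    have hpos : (0:ℝ) < 1/((n:ℝ)+1) := by positivity
    have h1 : ∃ᶠ k in atTop, d - 1/((n:ℝ)+1) < f k :=
      frequently_lt_of_lt_limsup hbd'.isCoboundedUnder_le (by rw [← hd]; linarith)
    have h2 : ∀ᶠ k in atTop, f k < d + 1/((n:ℝ)+1) :=
      eventually_lt_of_limsup_lt (by rw [← hd]; linarith) hbd
    exact (h1.and_eventually h2).mono
      (fun k hk => abs_lt.mpr ⟨by linarith [hk.1], by linarith [hk.2]⟩)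
  obtain ⟨φ, hφmono, hφ⟩ := Filter.extraction_forall_of_frequently hfreq
  refine ⟨φ, hφmono, ?_⟩
  have h0 : Tendsto (fun n : ℕ => (1:ℝ)/((n:ℝ)+1)) atTop (𝓝 0) :=
    tendsto_one_div_add_atTop_nhds_zero_nat
  have h3 : Tendsto (fun n => f (φ n) - d) atTop (𝓝 0) :=
    squeeze_zero_norm (fun n => le_of_lt (by simpa [Real.norm_eq_abs] using hφ n)) h0
  have h4 := h3.add (tendsto_const_nhds (x := d))
  rw [zero_add] at h4
  exact h4.congr (fun n => by simp [Function.comp])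

lemma le_limsup_along (U : Ultrafilter ℕ) (hU : (U : Filter ℕ) ≤ atTop) {f : ℕ → ℝ}
    (h : ∀ n, f n ∈ Set.Icc (0:ℝ) 1) {c : ℝ} (hc : Tendsto f U (𝓝 c)) :
    c ≤ limsup f atTop := by
  have h1 : limsup f (U : Filter ℕ) = c := hc.limsup_eq
  rw [← h1]
  have hb : IsBoundedUnder (· ≥ ·) (U : Filter ℕ) f := isBoundedUnder_of ⟨0, fun n => (h n).1⟩
  have hb2 : IsBoundedUnder (· ≤ ·) (atTop : Filter ℕ) f :=
    isBoundedUnder_of ⟨1, fun n => (h n).2⟩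
  exact limsup_le_limsup_of_le hU hb.isCoboundedUnder_le hb2

/-! ### Glue with `upperDensityZ` -/

lemma upperDensityZ_eq_limsup_frac (A : Set (Fin l → ℤ)) :
    upperDensityZ l A = limsup (frac A) atTop := by
  rw [upperDensityZ]
  congr 1
  funext N
  have h1 : Nat.card {m : Fin l → ℤ // m ∈ A ∧ ∀ i, |m i| ≤ (N:ℤ)} = cnt A N := by
    have h2 : Nat.card {m : Fin l → ℤ // m ∈ A ∧ ∀ i, |m i| ≤ (N:ℤ)}
        = ({m : Fin l → ℤ | m ∈ A ∧ ∀ i, |m i| ≤ (N:ℤ)}).ncard :=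
      Nat.card_coe_set_eq _
    rw [h2, cnt]
    congr 1
    ext m
    simp only [Set.mem_setOf_eq, Set.mem_inter_iff, mem_Box]
    tauto
  show _ / _ = (cnt A N : ℝ) / den l N
  rw [h1]
  rfl

/-! ### Algebra of the shift maps -/

lemma sum_single_eq (v : Fin l → ℤ) : (∑ j, v j • Pi.single j (1:ℤ)) = v := by
  funext p
  rw [Finset.sum_apply]
  simp [Pi.single_apply]

lemma prod_ofFn_shift {k : ℕ} (n : Fin k → Fin l → ℤ) (i : Fin k) :
    (List.ofFn fun j => Shom l (Multiplicative.ofAdd (Pi.single j (1:ℤ))) ^ (n i j)).prod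
      = Shom l (Multiplicative.ofAdd (n i)) := by
  have h1 : (fun j => Shom l (Multiplicative.ofAdd (Pi.single j (1:ℤ))) ^ (n i j))
      = fun j => Shom l (Multiplicative.ofAdd ((n i j) • Pi.single j (1:ℤ))) := by
    funext j
    rw [ofAdd_zsmul, map_zpow]
  rw [h1]
  have h2 : (fun j => Shom l (Multiplicative.ofAdd ((n i j) • Pi.single j (1:ℤ))))
      = (Shom l) ∘ (fun j => Multiplicative.ofAdd ((n i j) • Pi.single j (1:ℤ))) := rfl
  rw [h2, ← List.map_ofFn, ← MonoidHom.map_list_prod]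
  congr 1
  rw [List.prod_ofFn, ← ofAdd_sum]
  congr 1
  exact sum_single_eq (l := l) (n i) ▸ (by rw [sum_single_eq])

end FCP

/-- **Furstenberg's correspondence principle.** For every `A ⊆ ℤ^ℓ` there is a probability
space together with commuting invertible measure-preserving transformations `T 1, …, T ℓ`
and a measurable set `E` such that `d̄(A) = μ(E)` and, for all `n 1, …, n k ∈ ℤ^ℓ`,
`d̄(A ∩ (A - n 1) ∩ ⋯ ∩ (A - n k)) ≥ μ(E ∩ (T^{n 1})⁻¹E ∩ ⋯ ∩ (T^{n k})⁻¹E)`. -/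
theorem furstenberg_correspondence (k ℓ : ℕ) (A : Set (Fin ℓ → ℤ)) :
    ∃ (X : Type) (mX : MeasurableSpace X) (μ : Measure X) (T : Fin ℓ → X ≃ᵐ X) (E : Set X),
      IsProbabilityMeasure μ ∧
      (∀ j, MeasurePreserving (⇑(T j)) μ μ) ∧
      (∀ i j, Commute (T i) (T j)) ∧
      MeasurableSet E ∧
      upperDensityZ ℓ A = (μ E).toReal ∧
      (∀ n : Fin k → Fin ℓ → ℤ,
        (μ (E ∩ ⋂ i, (⇑((List.ofFn fun j => T j ^ n i j).prod)) ⁻¹' E)).toReal ≤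
          upperDensityZ ℓ (A ∩ ⋂ i, {m : Fin ℓ → ℤ | m + n i ∈ A})) := by
  obtain ⟨φ, hφmono, hφtend⟩ := FCP.exists_subseq_tendsto_limsup (FCP.frac_mem_Icc A)
  have hmapne : (Filter.map φ (atTop : Filter ℕ)).NeBot := Filter.map_neBot
  set U : Ultrafilter ℕ := Ultrafilter.of (Filter.map φ atTop) with hUdef
  have hU1 : (U : Filter ℕ) ≤ Filter.map φ atTop := Ultrafilter.of_le _
  have hU2 : (U : Filter ℕ) ≤ atTop := hU1.trans hφmono.tendsto_atTop
  have hpre : FCP.iota A ⁻¹' FCP.EE ℓ = A := by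
    ext a; simp [Set.mem_preimage, FCP.iota_mem_EE]
  have htendE : Tendsto (FCP.frac A) (U : Filter ℕ) (𝓝 (FCP.LD U A)) := by
    have h := FCP.LD_tendsto U A
    exact h
  have htendd : Tendsto (FCP.frac A) (U : Filter ℕ) (𝓝 (upperDensityZ ℓ A)) := by
    rw [FCP.upperDensityZ_eq_limsup_frac A]
    exact (Filter.tendsto_map'_iff.mpr hφtend).mono_left hU1
  have hdEQ : FCP.LD U A = upperDensityZ ℓ A := tendsto_nhds_unique htendE htendd
  refine ⟨FCP.XX ℓ, inferInstance, FCP.XMeasure U A,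
    (fun j => FCP.Shom ℓ (Multiplicative.ofAdd (Pi.single j (1:ℤ)))), FCP.EE ℓ,
    FCP.XMeasure_prob U A, ?_, ?_, ?_, ?_, ?_⟩
  · intro j
    exact FCP.XMeasure_shift_preserving U A hU2 (Pi.single j 1)
  · intro i j
    exact (Commute.all (Multiplicative.ofAdd (Pi.single i (1:ℤ)))
      (Multiplicative.ofAdd (Pi.single j (1:ℤ)))).map (FCP.Shom ℓ)
  · exact FCP.isClopen_EE.isOpen.measurableSet
  · rw [FCP.XMeasure_clopen U A FCP.isClopen_EE,
      ENNReal.toReal_ofReal (FCP.LX_nonneg U A _)]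
    show upperDensityZ ℓ A = FCP.LD U (FCP.iota A ⁻¹' FCP.EE ℓ)
    rw [hpre, hdEQ]
  · intro n
    have hsets : (FCP.EE ℓ ∩ ⋂ i, (⇑((List.ofFn fun j =>
          (FCP.Shom ℓ (Multiplicative.ofAdd (Pi.single j (1:ℤ)))) ^ (n i j)).prod)) ⁻¹' FCP.EE ℓ)
        = FCP.EE ℓ ∩ ⋂ i, FCP.shiftF (n i) ⁻¹' FCP.EE ℓ := by
      congr 1
      apply Set.iInter_congr
      intro i
      rw [FCP.prod_ofFn_shift n i]
      rfl
    rw [hsets]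
    have hclop : IsClopen (FCP.EE ℓ ∩ ⋂ i, FCP.shiftF (n i) ⁻¹' FCP.EE ℓ) :=
      FCP.isClopen_EE.inter (isClopen_iInter_of_finite fun i =>
        FCP.isClopen_EE.preimage (FCP.continuous_shiftF _))
    rw [FCP.XMeasure_clopen U A hclop, ENNReal.toReal_ofReal (FCP.LX_nonneg U A _)]
    have hpre2 : FCP.iota A ⁻¹' (FCP.EE ℓ ∩ ⋂ i, FCP.shiftF (n i) ⁻¹' FCP.EE ℓ)
        = A ∩ ⋂ i, {m : Fin ℓ → ℤ | m + n i ∈ A} := by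
      ext a
      simp only [Set.preimage_inter, Set.mem_inter_iff, Set.mem_preimage, Set.preimage_iInter,
        Set.mem_iInter, FCP.iota_mem_EE, FCP.shiftF_iota, Set.mem_setOf_eq]
    have hLXeq : FCP.LX U A (FCP.EE ℓ ∩ ⋂ i, FCP.shiftF (n i) ⁻¹' FCP.EE ℓ)
        = FCP.LD U (A ∩ ⋂ i, {m : Fin ℓ → ℤ | m + n i ∈ A}) := by
      rw [FCP.LX, hpre2]
    rw [hLXeq, FCP.upperDensityZ_eq_limsup_frac]
    exact FCP.le_limsup_along U hU2 (FCP.frac_mem_Icc _) (FCP.LD_tendsto U _)
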